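/- Let A be an n×n complex matrix, u, v ∈ ℂⁿ, let m_A denote the minimal polynomial of A of degree l, and suppose v*u = v*Au = ⋯ = v*A^{l−1}u = 0. Then for every τ ∈ ℂ the characteristic polynomial of A + τ u v* equals the characteristic polynomial of A; in particular the spectrum of A + τ u v* (with algebraic multiplicities) equals that of A for every τ ∈ ℂ. -/

import Mathlib

open Matrix Polynomial

theorem stmt6 {n : ℕ} (A : Matrix (Fin n) (Fin n) ℂ) (u v : Fin n → ℂ)
    (h : ∀ j < (minpoly ℂ A).natDegree, star v ⬝ᵥ (A ^ j).mulVec u = 0) :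
    ∀ τ : ℂ, (A + τ • vecMulVec u (star v)).charpoly = A.charpoly := by
  intro τ
  have hint : IsIntegral ℂ A := Algebra.IsIntegral.isIntegral A
  have hmonic := minpoly.monic hint
  have hsum : ∀ (s : Finset ℕ) (g : ℕ → Matrix (Fin n) (Fin n) ℂ),
      star v ⬝ᵥ (∑ i ∈ s, g i).mulVec u = ∑ i ∈ s, star v ⬝ᵥ (g i).mulVec u := by
    intro s g
    induction s using Finset.induction with
    | empty => simp
    | insert a s hx ih =>
        rw [Finset.sum_insert hx, Finset.sum_insert hx, Matrix.add_mulVec, dotProduct_add, ih]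
  -- every polynomial in `A` is killed by `star v ⬝ᵥ · *ᵥ u`
  have hall : ∀ p : ℂ[X], star v ⬝ᵥ (aeval A p).mulVec u = 0 := by
    intro p
    have h1 : aeval A p = aeval A (p %ₘ minpoly ℂ A) := by
      conv_lhs => rw [← Polynomial.modByMonic_add_div p (minpoly ℂ A)]
      simp [minpoly.aeval]
    rw [h1]
    set r := p %ₘ minpoly ℂ A with hr
    by_cases hr0 : r = 0
    · simp [hr0]
    · have hdeg : r.natDegree < (minpoly ℂ A).natDegree :=
        Polynomial.natDegree_lt_natDegree hr0 (Polynomial.degree_modByMonic_lt p hmonic)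
      rw [Polynomial.aeval_eq_sum_range' hdeg, hsum]
      apply Finset.sum_eq_zero
      intro i hi
      rw [Matrix.smul_mulVec, dotProduct_smul, h i (Finset.mem_range.mp hi), smul_zero]
  -- evaluation of charpoly
  have hev : ∀ (M : Matrix (Fin n) (Fin n) ℂ) (x : ℂ),
      eval x M.charpoly = (Matrix.scalar (Fin n) x - M).det := by
    intro M x
    rw [Matrix.charpoly, _root_.eval_det, matPolyEquiv_charmatrix]
    simp
  -- pointwise statement off the spectrum
  have key : ∀ x : ℂ, eval x A.charpoly ≠ 0 →
      eval x (A + τ • vecMulVec u (star v)).charpoly = eval x A.charpoly := by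
    intro x hx
    set B : Matrix (Fin n) (Fin n) ℂ := Matrix.scalar (Fin n) x - A with hB
    have hBdet : IsUnit B.det := by
      rw [isUnit_iff_ne_zero, ← hev A x]; exact hx
    -- the inverse of B is a polynomial in A
    have hBinv : star v ⬝ᵥ B⁻¹.mulVec u = 0 := by
      have hc : B.charpoly.coeff 0 ≠ 0 := by
        intro h0
        have hd := Matrix.det_eq_sign_charpoly_coeff B
        rw [h0, mul_zero] at hd
        exact (isUnit_iff_ne_zero.mp hBdet) hd
      set c : ℂ := B.charpoly.coeff 0 with hcdef
      have hCH : aeval B B.charpoly = 0 := Matrix.aeval_self_charpoly B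
      have hsplit : (X : ℂ[X]) * B.charpoly.divX + C c = B.charpoly :=
        Polynomial.X_mul_divX_add B.charpoly
      have hmul : B * aeval B B.charpoly.divX + c • 1 = 0 := by
        have h2 := congrArg (aeval B) hsplit
        rw [map_add, _root_.map_mul, aeval_X, hCH, aeval_C,
          Algebra.algebraMap_eq_smul_one] at h2
        exact h2
      have hright : B * ((-c⁻¹) • aeval B B.charpoly.divX) = 1 := by
        rw [Matrix.mul_smul]
        have h3 : B * aeval B B.charpoly.divX = -(c • 1) :=
          eq_neg_of_add_eq_zero_left hmul
        rw [h3, smul_neg, neg_smul, neg_neg, smul_smul, inv_mul_cancel₀ hc, one_smul]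
      have hinv : B⁻¹ = (-c⁻¹) • aeval B B.charpoly.divX :=
        Matrix.inv_eq_right_inv hright
      have hscal : aeval A (C x - X : ℂ[X]) = B := by
        rw [map_sub, aeval_X, aeval_C, hB]
        rfl
      have hpoly : aeval B B.charpoly.divX = aeval A (B.charpoly.divX.comp (C x - X)) := by
        rw [Polynomial.aeval_comp, hscal]
      rw [hinv, hpoly, Matrix.smul_mulVec, dotProduct_smul,
        hall (B.charpoly.divX.comp (C x - X)), smul_zero]
    -- matrix determinant lemma
    have hcr : (-τ) • vecMulVec u (star v) =
        replicateCol Unit ((-τ) • u) * replicateRow Unit (star v) := by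
      ext i j
      simp [vecMulVec_apply, Matrix.mul_apply, Matrix.replicateCol_apply, Matrix.replicateRow_apply]
      ring
    have hsplit2 : Matrix.scalar (Fin n) x - (A + τ • vecMulVec u (star v)) =
        B + replicateCol Unit ((-τ) • u) * replicateRow Unit (star v) := by
      rw [← hcr, hB, neg_smul]
      abel
    have h11 : (1 + replicateRow Unit (star v) * B⁻¹ * replicateCol Unit ((-τ) • u)).det = 1 := by
      rw [Matrix.det_unique]
      have hentry : (replicateRow Unit (star v) * B⁻¹ * replicateCol Unit ((-τ) • u)) default default
          = star v ᵥ* B⁻¹ ⬝ᵥ (-τ) • u := by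
        rw [← Matrix.replicateRow_vecMul, Matrix.replicateRow_mul_replicateCol_apply]
      rw [Matrix.add_apply, Matrix.one_apply_eq, hentry, ← Matrix.dotProduct_mulVec,
        Matrix.mulVec_smul, dotProduct_smul, hBinv, smul_zero, add_zero]
    rw [hev, hev, hsplit2, Matrix.det_add_replicateCol_mul_replicateRow hBdet, h11, mul_one]
  -- conclude by comparing polynomials
  have hzero : ((A + τ • vecMulVec u (star v)).charpoly - A.charpoly) * A.charpoly = 0 := by
    apply Polynomial.funext
    intro x
    rw [eval_zero, eval_mul, eval_sub]
    by_cases hx : eval x A.charpoly = 0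
    · rw [hx, mul_zero]
    · rw [key x hx, sub_self, zero_mul]
  rcases mul_eq_zero.mp hzero with h1 | h1
  · exact sub_eq_zero.mp h1
  · exact absurd h1 (Matrix.charpoly_monic A).ne_zero
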